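/- Let Φ : [0,∞) → [0,∞) be continuous, increasing, with Φ(0)=0, such that t ↦ Φ(√t) is convex. Then for all real numbers u, v: (1/2)[Φ(|u|) + Φ(|v|)] ≥ Φ(|u+v|/2) + Φ(|u−v|/2). -/

import Mathlib

open Set

theorem stmt_6 (Φ : ℝ → ℝ)
    (hcont : ContinuousOn Φ (Ici 0))
    (hmono : StrictMonoOn Φ (Ici 0))
    (hΦ0 : Φ 0 = 0)
    (hconv : ConvexOn ℝ (Ici 0) (fun t => Φ (Real.sqrt t))) :
    ∀ u v : ℝ, Φ (|u + v| / 2) + Φ (|u - v| / 2) ≤ (Φ |u| + Φ |v|) / 2 := by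
  intro u v
  set g : ℝ → ℝ := fun t => Φ (Real.sqrt t) with hg
  have hg0 : g 0 = 0 := by simp [hg, hΦ0]
  -- superadditivity of g on [0,∞)
  have hsuper : ∀ x y : ℝ, 0 ≤ x → 0 ≤ y → g x + g y ≤ g (x + y) := by
    intro x y hx hy
    rcases eq_or_lt_of_le (add_nonneg hx hy) with h0 | h0
    · have hx0 : x = 0 := by linarith
      have hy0 : y = 0 := by linarith
      simp [hx0, hy0, hg0]
    · have hxs : x = (x / (x + y)) • (x + y) + (y / (x + y)) • (0 : ℝ) := by
        rw [smul_eq_mul, smul_eq_mul, mul_zero, add_zero, div_mul_cancel₀ _ h0.ne']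
      have hys : y = (y / (x + y)) • (x + y) + (x / (x + y)) • (0 : ℝ) := by
        rw [smul_eq_mul, smul_eq_mul, mul_zero, add_zero, div_mul_cancel₀ _ h0.ne']
      have h1 : g x ≤ (x / (x + y)) * g (x + y) + (y / (x + y)) * g 0 := by
        have := hconv.2 (mem_Ici.2 (le_of_lt h0)) (mem_Ici.2 le_rfl)
          (div_nonneg hx h0.le) (div_nonneg hy h0.le)
          (by field_simp)
        rw [← hxs] at this
        simpa [smul_eq_mul] using this
      have h2 : g y ≤ (y / (x + y)) * g (x + y) + (x / (x + y)) * g 0 := by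
        have := hconv.2 (mem_Ici.2 (le_of_lt h0)) (mem_Ici.2 le_rfl)
          (div_nonneg hy h0.le) (div_nonneg hx h0.le)
          (by field_simp; ring)
        rw [← hys] at this
        simpa [smul_eq_mul] using this
      have hsum : x / (x + y) + y / (x + y) = 1 := by field_simp
      rw [hg0, mul_zero, add_zero] at h1 h2
      calc g x + g y ≤ (x / (x + y) + y / (x + y)) * g (x + y) := by
              rw [add_mul]; linarith
        _ = g (x + y) := by rw [hsum, one_mul]
  have key1 : Φ (|u + v| / 2) = g (((u + v) / 2) ^ 2) := by
    rw [hg]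
    simp [Real.sqrt_sq_eq_abs, abs_div]
  have key2 : Φ (|u - v| / 2) = g (((u - v) / 2) ^ 2) := by
    rw [hg]
    simp [Real.sqrt_sq_eq_abs, abs_div]
  have key3 : Φ |u| = g (u ^ 2) := by rw [hg]; simp [Real.sqrt_sq_eq_abs]
  have key4 : Φ |v| = g (v ^ 2) := by rw [hg]; simp [Real.sqrt_sq_eq_abs]
  have hsq : ((u + v) / 2) ^ 2 + ((u - v) / 2) ^ 2 = (u ^ 2 + v ^ 2) / 2 := by ring
  have step1 : g (((u + v) / 2) ^ 2) + g (((u - v) / 2) ^ 2) ≤ g ((u ^ 2 + v ^ 2) / 2) := by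
    rw [← hsq]
    exact hsuper _ _ (sq_nonneg _) (sq_nonneg _)
  have step2 : g ((u ^ 2 + v ^ 2) / 2) ≤ (g (u ^ 2) + g (v ^ 2)) / 2 := by
    have := hconv.2 (mem_Ici.2 (sq_nonneg u)) (mem_Ici.2 (sq_nonneg v))
      (by norm_num : (0:ℝ) ≤ 1/2) (by norm_num : (0:ℝ) ≤ 1/2) (by norm_num)
    have heq : (1/2 : ℝ) • (u ^ 2) + (1/2 : ℝ) • (v ^ 2) = (u ^ 2 + v ^ 2) / 2 := by
      simp [smul_eq_mul]; ring
    rw [heq] at this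
    simp only [smul_eq_mul] at this
    linarith
  rw [key1, key2, key3, key4]
  linarith
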